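/- Let λ > 0 and let u : [0,∞) → ℝ² be the differentiable solution of u'(t) = u(t)A with u(0) = (γλ/ε, -λ/β). Then for every t > 0 it is impossible that simultaneously the second coordinate satisfies u₂(t) = -λ/β and the first coordinate satisfies u₁(t) ≥ γλ/ε. -/

import Mathlib

/-- the solution of `u'(t) = u(t)A` started at
`(γλ/ε, -λ/β)` never again satisfies both `u₂(t) = -λ/β` and `u₁(t) ≥ γλ/ε`
for `t > 0`. -/
theorem stmt_14 (β γ ε lam : ℝ) (hβ : 0 < β) (hγ : 0 < γ) (hε : 0 < ε)
    (hεbound : ε < γ ^ 2 * β / 4) (hlam : 0 < lam)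
    (u : ℝ → ℝ × ℝ)
    (h0 : u 0 = (γ * lam / ε, -lam / β))
    (hode : ∀ t : ℝ, 0 ≤ t →
      HasDerivAt (fun s => (u s).1) (β * (u t).2) t ∧
      HasDerivAt (fun s => (u s).2) (-(ε * (u t).1) - γ * β * (u t).2) t) :
    ∀ t : ℝ, 0 < t → ¬((u t).2 = -lam / β ∧ γ * lam / ε ≤ (u t).1) := by
  intro t ht hcontra
  obtain ⟨h2eq, h1ge⟩ := hcontra
  set E : ℝ → ℝ := fun s => β ^ 2 * (u s).2 ^ 2 + ε * β * (u s).1 ^ 2 with hEdef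
  have hEderiv : ∀ s : ℝ, 0 ≤ s →
      HasDerivAt E (-(2 * γ * β ^ 3 * (u s).2 ^ 2)) s := by
    intro s hs
    obtain ⟨h1, h2⟩ := hode s hs
    have := ((h2.mul h2).const_mul (β ^ 2)).add ((h1.mul h1).const_mul (ε * β))
    refine (this.congr_deriv (by ring)).congr_of_eventuallyEq (Filter.Eventually.of_forall fun x => ?_)
    simp only [hEdef, Pi.add_apply, Pi.mul_apply]; ring
  have hcont : ContinuousOn E (Set.Icc 0 t) := fun s hs =>
    (hEderiv s hs.1).continuousAt.continuousWithinAt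
  have hanti : AntitoneOn E (Set.Icc 0 t) := by
    apply antitoneOn_of_deriv_nonpos (convex_Icc 0 t) hcont
    · intro s hs
      rw [interior_Icc] at hs
      exact (hEderiv s hs.1.le).differentiableAt.differentiableWithinAt
    · intro s hs
      rw [interior_Icc] at hs
      rw [(hEderiv s hs.1.le).deriv]
      have := mul_nonneg (le_of_lt (mul_pos (mul_pos two_pos hγ) (pow_pos hβ 3))) (sq_nonneg (u s).2)
      linarith
  have h0mem : (0 : ℝ) ∈ Set.Icc (0 : ℝ) t := ⟨le_refl 0, ht.le⟩
  have htmem : t ∈ Set.Icc (0 : ℝ) t := ⟨ht.le, le_refl t⟩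
  have hle : E t ≤ E 0 := hanti h0mem htmem ht.le
  have hge : E 0 ≤ E t := by
    simp only [hEdef, h0, h2eq]
    have h1pos : 0 < γ * lam / ε := by positivity
    nlinarith [sq_nonneg ((u t).1 - γ * lam / ε), mul_pos (mul_pos hε hβ) h1pos,
      mul_le_mul_of_nonneg_left h1ge (le_of_lt (mul_pos hε hβ))]
  have hEeq : E t = E 0 := le_antisymm hle hge
  have hconst : ∀ s ∈ Set.Ioo (0 : ℝ) t, E s = E 0 := by
    intro s hs
    have hsm : s ∈ Set.Icc (0 : ℝ) t := ⟨hs.1.le, hs.2.le⟩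
    exact le_antisymm (hanti h0mem hsm hs.1.le)
      (hEeq ▸ hanti hsm htmem hs.2.le)
  have hu2 : ∀ s ∈ Set.Ioo (0 : ℝ) t, (u s).2 = 0 := by
    intro s hs
    have hnb : Set.Ioo (0 : ℝ) t ∈ nhds s := isOpen_Ioo.mem_nhds hs
    have heq : E =ᶠ[nhds s] fun _ => E 0 :=
      Filter.eventuallyEq_of_mem hnb fun x hx => hconst x hx
    have hzero : HasDerivAt E 0 s :=
      (hasDerivAt_const s (E 0)).congr_of_eventuallyEq heq
    have huniq := (hEderiv s hs.1.le).unique hzero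
    have hmul : (2 * γ * β ^ 3) * (u s).2 ^ 2 = 0 := by linarith
    have hcne : (2 * γ * β ^ 3) ≠ 0 := by positivity
    have hsq : (u s).2 ^ 2 = 0 := (mul_eq_zero.mp hmul).resolve_left hcne
    exact (pow_eq_zero_iff two_ne_zero).mp hsq
  have hc : ContinuousAt (fun s => (u s).2) 0 := (hode 0 le_rfl).2.continuousAt
  rw [Metric.continuousAt_iff] at hc
  obtain ⟨δ, hδ, hball⟩ := hc (lam / β / 2) (by positivity)
  set s : ℝ := min (t / 2) (δ / 2) with hsdef
  have hs0 : 0 < s := lt_min (by linarith) (by linarith)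
  have hst : s < t := lt_of_le_of_lt (min_le_left _ _) (by linarith)
  have hdist : dist s 0 < δ := by
    rw [Real.dist_eq, sub_zero, abs_of_pos hs0]
    exact lt_of_le_of_lt (min_le_right _ _) (by linarith)
  have := hball hdist
  rw [hu2 s ⟨hs0, hst⟩, h0] at this
  simp only [Real.dist_eq] at this
  have hlb : 0 < lam / β := by positivity
  have habs : |(0 : ℝ) - -lam / β| = lam / β := by
    rw [show (0 : ℝ) - -lam / β = lam / β by ring]
    exact abs_of_pos hlb
  rw [habs] at this
  linarith
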